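/- arXiv:2103.00386 — 2 statements merged into one kernel-verified Lean document; each statement's English description precedes it below -/
import Mathlib

section
/- Let R be a dwindling convergent SRS over a finite alphabet Σ in which, additionally, the right-hand side of every rule has length at most 1. Let α be a nonempty irreducible string and let W be a minimal-length string satisfying α·W ↔*_R W. Then W is a prefix of α. -/
/- Strings over an alphabet `σ` are modelled as `List σ`; a finite string
rewriting system is a finite list of rules `(l, r)`. -/

namespace SRS

variable {σ : Type*}

/-- One-step rewrite relation: `u →_R v`. -/
def Step (R : List (List σ × List σ)) (u v : List σ) : Prop :=
  ∃ x y l r, (l, r) ∈ R ∧ u = x ++ l ++ y ∧ v = x ++ r ++ y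

/-- `u →*_R v`: reflexive-transitive closure. -/
def Reduces (R : List (List σ × List σ)) : List σ → List σ → Prop :=
  Relation.ReflTransGen (Step R)

/-- `u ↔*_R v`: reflexive-symmetric-transitive closure. -/
def Equiv (R : List (List σ × List σ)) : List σ → List σ → Prop :=
  Relation.EqvGen (Step R)

/-- `u ↓_R v`: joinability, i.e. a common reduct exists. -/
def Joins (R : List (List σ × List σ)) : List σ → List σ → Prop :=
  Relation.Join (Reduces R)

/-- A string is irreducible if no rule applies to it. -/
def Irreducible (R : List (List σ × List σ)) (u : List σ) : Prop :=
  ∀ v, ¬ Step R u v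

/-- `u →!_R v`: `v` is an `R`-normal form of `u`. -/
def NormalizesTo (R : List (List σ × List σ)) (u v : List σ) : Prop :=
  Reduces R u v ∧ Irreducible R v

/-- Terminating: no infinite chain of rewrite steps. -/
def Terminating (R : List (List σ × List σ)) : Prop :=
  ¬ ∃ f : ℕ → List σ, ∀ n, Step R (f n) (f (n + 1))

def Confluent (R : List (List σ × List σ)) : Prop :=
  ∀ t s₁ s₂, Reduces R t s₁ → Reduces R t s₂ →
    ∃ t', Reduces R s₁ t' ∧ Reduces R s₂ t'

def Convergent (R : List (List σ × List σ)) : Prop :=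
  Terminating R ∧ Confluent R

/-- Dwindling: every right-hand side is a proper prefix of its left-hand side. -/
def Dwindling (R : List (List σ × List σ)) : Prop :=
  ∀ p ∈ R, p.2 <+: p.1 ∧ p.2 ≠ p.1

/-- Monadic: length-reducing with right-hand sides of length at most 1. -/
def Monadic (R : List (List σ × List σ)) : Prop :=
  ∀ p ∈ R, p.2.length < p.1.length ∧ p.2.length ≤ 1

/-- `MP α`: normal forms of `p ++ s` with `p` a prefix of `α` and `s` a single
symbol or the empty string. -/
def MP (R : List (List σ × List σ)) (α : List σ) : Set (List σ) :=
  { γ | ∃ p s, p <+: α ∧ s.length ≤ 1 ∧ NormalizesTo R (p ++ s) γ }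

end SRS

section Aux

open SRS

variable {σ : Type*} {R : List (List σ × List σ)}

lemma aux_step_append_left {u v : List σ} (a : List σ) (h : Step R u v) :
    Step R (a ++ u) (a ++ v) := by
  obtain ⟨x, y, l, r, hmem, hu, hv⟩ := h
  exact ⟨a ++ x, y, l, r, hmem, by simp [hu], by simp [hv]⟩

lemma aux_reduces_append_left {u v : List σ} (a : List σ) (h : Reduces R u v) :
    Reduces R (a ++ u) (a ++ v) :=
  h.lift (a ++ ·) (fun _ _ => aux_step_append_left a)

lemma aux_length_lt_of_step (hdw : Dwindling R) {u v : List σ} (h : Step R u v) :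
    v.length < u.length := by
  obtain ⟨x, y, l, r, hmem, hu, hv⟩ := h
  obtain ⟨hpre, hne⟩ := hdw _ hmem
  have hlt : r.length < l.length :=
    lt_of_le_of_ne hpre.length_le
      (fun he => hne (hpre.sublist.eq_of_length he))
  subst hu hv; simp; omega

lemma aux_length_le_of_reduces (hdw : Dwindling R) {u v : List σ} (h : Reduces R u v) :
    v.length ≤ u.length := by
  induction h with
  | refl => exact le_refl _
  | tail _ hstep ih => exact le_trans (aux_length_lt_of_step hdw hstep).le ih

lemma aux_irreducible_of_prefix {u p : List σ} (h : Irreducible R u) (hp : p <+: u) :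
    Irreducible R p := by
  obtain ⟨t, rfl⟩ := hp
  rintro v ⟨x, y, l, r, hmem, hu, hv'⟩
  exact h (x ++ r ++ (y ++ t)) ⟨x, y ++ t, l, r, hmem, by simp [hu], by simp⟩

lemma aux_irreducible_of_suffix {u p : List σ} (h : Irreducible R u) (hp : p <:+ u) :
    Irreducible R p := by
  obtain ⟨t, rfl⟩ := hp
  rintro v ⟨x, y, l, r, hmem, hu, hv'⟩
  exact h (t ++ x ++ r ++ y) ⟨t ++ x, y, l, r, hmem, by simp [hu], by simp⟩

lemma aux_exists_normalizesTo (hdw : Dwindling R) : ∀ u : List σ, ∃ v, NormalizesTo R u v := by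
  intro u
  by_cases h : ∃ w, Step R u w
  · obtain ⟨w, hw⟩ := h
    have hlt := aux_length_lt_of_step hdw hw
    obtain ⟨v, hv1, hv2⟩ := aux_exists_normalizesTo hdw w
    exact ⟨v, Relation.ReflTransGen.head hw hv1, hv2⟩
  · exact ⟨u, Relation.ReflTransGen.refl, fun v hv => h ⟨v, hv⟩⟩
termination_by u => u.length
decreasing_by exact hlt

lemma aux_reduces_equiv {u v : List σ} (h : Reduces R u v) : Equiv R u v := by
  induction h with
  | refl => exact Relation.EqvGen.refl _
  | tail _ hstep ih =>
      exact Relation.EqvGen.trans _ _ _ ih (Relation.EqvGen.rel _ _ hstep)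

lemma aux_joins_of_equiv (hc : Confluent R) {u v : List σ} (h : Equiv R u v) :
    Joins R u v := by
  induction h with
  | rel a b h => exact ⟨b, Relation.ReflTransGen.single h, Relation.ReflTransGen.refl⟩
  | refl a => exact ⟨a, Relation.ReflTransGen.refl, Relation.ReflTransGen.refl⟩
  | symm a b _ ih => obtain ⟨t, h1, h2⟩ := ih; exact ⟨t, h2, h1⟩
  | trans a b c _ _ ih1 ih2 =>
      obtain ⟨t1, h1, h2⟩ := ih1
      obtain ⟨t2, h3, h4⟩ := ih2
      obtain ⟨t, h5, h6⟩ := hc b t1 t2 h2 h3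
      exact ⟨t, h1.trans h5, h4.trans h6⟩

lemma aux_eq_of_irreducible_reduces {u v : List σ} (h : Irreducible R u)
    (hr : Reduces R u v) : u = v := by
  rcases Relation.ReflTransGen.cases_head hr with rfl | ⟨w, hw, _⟩
  · rfl
  · exact absurd hw (h w)

/-- Key single-step analysis: a rewrite step from `γ ++ y` with `γ, y` irreducible
must straddle the boundary. -/
lemma aux_step_decomp (hdw : Dwindling R) (hrhs : ∀ p ∈ R, p.2.length ≤ 1)
    {γ y u : List σ} (hγ : Irreducible R γ) (hy : Irreducible R y)
    (h : Step R (γ ++ y) u) :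
    ∃ γ₁ y₁ y₂, y = y₁ ++ y₂ ∧ y₁ ≠ [] ∧ u = γ₁ ++ y₂ ∧ γ₁ <+: γ ∧
      ∀ t, Step R (γ ++ y₁ ++ t) (γ₁ ++ t) := by
  obtain ⟨x, z, l, r, hmem, hu, hv⟩ := h
  have hlne : l ≠ [] := by
    intro hl
    obtain ⟨hpre, hne⟩ := hdw _ hmem
    subst hl
    exact hne (List.prefix_nil.mp hpre)
  rcases le_or_gt γ.length x.length with hle | hlt
  · -- redex entirely inside y : contradiction
    have hxpre : γ <+: x := by
      have h1 : γ <+: x ++ l ++ z := hu ▸ (List.prefix_append γ y)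
      have h2 : x <+: x ++ l ++ z := by
        simpa [List.append_assoc] using (List.prefix_append x (l ++ z))
      exact List.prefix_of_prefix_length_le h1 h2 hle
    obtain ⟨x', rfl⟩ := hxpre
    have hy' : y = x' ++ l ++ z := by
      apply List.append_cancel_left (as := γ)
      simpa [List.append_assoc] using hu
    exact absurd ⟨x', z, l, r, hmem, hy', rfl⟩ (hy _)
  rcases le_or_gt (x.length + l.length) γ.length with hle2 | hlt2
  · -- redex entirely inside γ : contradiction
    have hxl : x ++ l <+: γ := by
      have h1 : x ++ l <+: x ++ l ++ z := List.prefix_append _ _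
      have h2 : γ <+: x ++ l ++ z := hu ▸ (List.prefix_append γ y)
      exact List.prefix_of_prefix_length_le h1 h2 (by simpa using hle2)
    obtain ⟨g, hg⟩ := hxl
    exact absurd ⟨x, g, l, r, hmem, hg.symm, rfl⟩ (hγ _)
  · -- redex straddles the boundary
    have hxpre : x <+: γ := by
      have h1 : x <+: x ++ l ++ z := by
        simpa [List.append_assoc] using (List.prefix_append x (l ++ z))
      have h2 : γ <+: x ++ l ++ z := hu ▸ (List.prefix_append γ y)
      exact List.prefix_of_prefix_length_le h1 h2 hlt.le
    obtain ⟨l₁, hl₁⟩ := hxpre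
    have hl₁len : l₁.length = γ.length - x.length := by
      have := congrArg List.length hl₁
      simp at this; omega
    have hl₁ne : l₁ ≠ [] := by
      intro hnil
      rw [hnil] at hl₁len
      simp at hl₁len; omega
    -- from hu : γ ++ y = x ++ l ++ z and γ = x ++ l₁ : l₁ ++ y = l ++ z
    have hkey : l₁ ++ y = l ++ z := by
      apply List.append_cancel_left (as := x)
      rw [← List.append_assoc, hl₁]
      simpa [List.append_assoc] using hu
    have hl₁pre : l₁ <+: l := by
      have h1 : l₁ <+: l ++ z := ⟨y, hkey⟩
      have h2 : l <+: l ++ z := List.prefix_append _ _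
      exact List.prefix_of_prefix_length_le h1 h2 (by omega)
    obtain ⟨l₂, hl₂⟩ := hl₁pre
    have hyeq : y = l₂ ++ z := by
      apply List.append_cancel_left (as := l₁)
      rw [hkey, ← hl₂, List.append_assoc]
    have hl₂ne : l₂ ≠ [] := by
      intro hnil
      rw [hnil, List.append_nil] at hl₂
      have := congrArg List.length hl₂
      omega
    have hrpre : r <+: l₁ := by
      have h1 : r <+: l := (hdw _ hmem).1
      have hr1 : r.length ≤ 1 := hrhs _ hmem
      refine List.prefix_of_prefix_length_le h1 ⟨l₂, hl₂⟩ ?_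
      have : 1 ≤ l₁.length := by
        cases l₁ with
        | nil => exact absurd rfl hl₁ne
        | cons a t => simp
      omega
    refine ⟨x ++ r, l₂, z, hyeq, hl₂ne, hv, ?_, ?_⟩
    · rw [← hl₁]
      obtain ⟨d, hd⟩ := hrpre
      exact ⟨d, by rw [List.append_assoc, hd]⟩
    · intro t
      refine ⟨x, t, l, r, hmem, ?_, rfl⟩
      rw [← hl₁, ← hl₂]
      simp [List.append_assoc]

/-- Key multi-step analysis with cancellation of the untouched suffix. -/
lemma aux_reduces_decomp (hdw : Dwindling R) (hrhs : ∀ p ∈ R, p.2.length ≤ 1)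
    {s v : List σ} (h : Reduces R s v) :
    ∀ γ y, s = γ ++ y → Irreducible R γ → Irreducible R y →
      ∃ γ' w z, γ' <+: γ ∧ y = w ++ z ∧ v = γ' ++ z ∧ Reduces R (γ ++ w) γ' := by
  induction h using Relation.ReflTransGen.head_induction_on with
  | refl =>
      intro γ y hs hγ hy
      refine ⟨γ, [], y, List.prefix_refl _, rfl, hs, ?_⟩
      rw [List.append_nil]
      exact Relation.ReflTransGen.refl
  | head hstep _ ih =>
      intro γ y hs hγ hy
      subst hs
      obtain ⟨γ₁, y₁, y₂, hy12, hy1ne, hu, hγ₁, hstep'⟩ :=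
        aux_step_decomp hdw hrhs hγ hy hstep
      obtain ⟨γ', w₂, z, hpre, hy2, hveq, hred⟩ :=
        ih γ₁ y₂ hu (aux_irreducible_of_prefix hγ hγ₁)
          (aux_irreducible_of_suffix hy ⟨y₁, hy12.symm⟩)
      refine ⟨γ', y₁ ++ w₂, z, hpre.trans hγ₁, by rw [hy12, hy2, List.append_assoc],
        hveq, ?_⟩
      have hstep₂ : Step R (γ ++ (y₁ ++ w₂)) (γ₁ ++ w₂) := by
        have := hstep' w₂
        rwa [List.append_assoc] at this
      exact Relation.ReflTransGen.head hstep₂ hred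

end Aux

/-- If `R` is dwindling and convergent and moreover every
right-hand side has length at most 1, then any minimal-length solution `W` of
`α ++ W ↔*_R W` (for `α` nonempty and irreducible) is a prefix of `α`. -/
theorem minimal_fixed_point_prefix_of_special_dwindling {σ : Type*} [Fintype σ]
    (R : List (List σ × List σ)) (hdw : SRS.Dwindling R) (hconv : SRS.Convergent R)
    (hrhs : ∀ p ∈ R, p.2.length ≤ 1)
    (α : List σ) (hα : α ≠ []) (hαirr : SRS.Irreducible R α)
    (W : List σ) (hW : SRS.Equiv R (α ++ W) W)
    (hmin : ∀ W' : List σ, SRS.Equiv R (α ++ W') W' → W.length ≤ W'.length) :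
    W <+: α := by
  classical
  -- Step 1: W is irreducible.
  obtain ⟨N, hNred, hNirr⟩ := aux_exists_normalizesTo hdw W
  have hNequiv : SRS.Equiv R (α ++ N) N := by
    have e1 : SRS.Equiv R (α ++ W) (α ++ N) :=
      aux_reduces_equiv (aux_reduces_append_left α hNred)
    exact Relation.EqvGen.trans _ _ _
      (Relation.EqvGen.trans _ _ _ (Relation.EqvGen.symm _ _ e1) hW)
      (aux_reduces_equiv hNred)
  have hWN : W = N := by
    rcases Relation.ReflTransGen.cases_head hNred with rfl | ⟨u, hu, hured⟩
    · rfl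
    · exfalso
      have h1 := hmin N hNequiv
      have h2 := aux_length_lt_of_step hdw hu
      have h3 := aux_length_le_of_reduces hdw hured
      omega
  have hWirr : SRS.Irreducible R W := hWN ▸ hNirr
  -- Step 2: α ++ W reduces to W.
  obtain ⟨t, h1, h2⟩ := aux_joins_of_equiv hconv.2 hW
  have htW : W = t := aux_eq_of_irreducible_reduces hWirr h2
  subst htW
  -- Step 3: decompose the reduction.
  obtain ⟨γ', w, z, hpre, hWwz, hWγz, hred⟩ :=
    aux_reduces_decomp hdw hrhs h1 α W rfl hαirr hWirr
  have hwγ : w = γ' := by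
    apply List.append_cancel_right (bs := z)
    rw [← hWwz, ← hWγz]
  subst hwγ
  have hmin' := hmin w (aux_reduces_equiv hred)
  have hz : z = [] := by
    have := congrArg List.length hWwz
    simp at this
    have : z.length = 0 := by omega
    exact List.length_eq_zero_iff.mp this
  subst hz
  rw [List.append_nil] at hWwz
  rw [hWwz]
  exact hpre
end

section
/- Let R be a finite monadic convergent SRS over a finite alphabet Σ and let α, β be irreducible strings. Then there exist distinct irreducible strings X and Y with α·X ↓_R α·Y and β·X ↓_R β·Y if and only if there exist irreducible strings X', Y', V and strings γ1, γ2 such that: (1) X' ≠ Y'; (2) γ1 ∈ MP(α); (3) γ2 ∈ MP(β); (4) X'·V and Y'·V are irreducible; and (5) either (a) α·X'·V →!_R γ1, α·Y'·V →!_R γ1, β·X' →!_R γ2 and β·Y' →!_R γ2, or (b) α·X' →!_R γ1, α·Y' →!_R γ1, β·X'·V →!_R γ2 and β·Y'·V →!_R γ2. -/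
section Proofs

open SRS

variable {σ : Type*} {R : List (List σ × List σ)}

private lemma suffix_of_suffix_length_le' {s₁ s₂ u : List σ} (h₁ : s₁ <:+ u) (h₂ : s₂ <:+ u)
    (h : s₁.length ≤ s₂.length) : s₁ <:+ s₂ := by
  obtain ⟨a₁, rfl⟩ := h₁
  obtain ⟨a₂, ha₂⟩ := h₂
  have hlen : a₂.length ≤ a₁.length := by
    have := congrArg List.length ha₂
    simp only [List.length_append] at this
    omega
  have hpre : a₂ <+: a₁ := List.prefix_of_prefix_length_le ⟨s₂, ha₂⟩ ⟨s₁, rfl⟩ hlen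
  obtain ⟨z, rfl⟩ := hpre
  refine ⟨z, ?_⟩
  have := ha₂
  rw [List.append_assoc] at this
  exact (List.append_cancel_left this).symm

private lemma step_context {u v : List σ} (x y : List σ) (h : Step R u v) :
    Step R (x ++ u ++ y) (x ++ v ++ y) := by
  obtain ⟨a, b, l, r, hR, rfl, rfl⟩ := h
  exact ⟨x ++ a, b ++ y, l, r, hR, by simp, by simp⟩

private lemma reduces_context {u v : List σ} (x y : List σ) (h : Reduces R u v) :
    Reduces R (x ++ u ++ y) (x ++ v ++ y) :=
  Relation.ReflTransGen.lift (fun w => x ++ w ++ y) (fun _ _ h => step_context x y h) _ _ h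

private lemma reduces_append_right {u v : List σ} (y : List σ) (h : Reduces R u v) :
    Reduces R (u ++ y) (v ++ y) := by
  have := reduces_context [] y h
  simpa using this

private lemma irred_of_infix {u v : List σ} (hu : Irreducible R u) (h : v <:+: u) :
    Irreducible R v := by
  rintro w ⟨x, y, l, r, hR, rfl, -⟩
  obtain ⟨s, t, rfl⟩ := h
  exact hu (s ++ x ++ r ++ (y ++ t)) ⟨s ++ x, y ++ t, l, r, hR, by simp, by simp⟩

private lemma reduces_eq_of_irred {u v : List σ} (hu : Irreducible R u) (h : Reduces R u v) :
    v = u := by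
  induction h with
  | refl => rfl
  | tail _ h₂ ih => exact absurd (ih ▸ h₂) (hu _)

private lemma normalizesTo_of_reduces (hconf : Confluent R) {u v w : List σ}
    (hr : Reduces R u v) (h : NormalizesTo R u w) : NormalizesTo R v w := by
  obtain ⟨t, ht₁, ht₂⟩ := hconf u v w hr h.1
  have : t = w := reduces_eq_of_irred h.2 ht₂
  exact ⟨this ▸ ht₁, h.2⟩

private lemma joins_normalizesTo (hconf : Confluent R) {u v A : List σ}
    (hj : Joins R u v) (h : NormalizesTo R u A) : NormalizesTo R v A := by
  obtain ⟨w, h₁, h₂⟩ := hj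
  exact ⟨h₂.trans (normalizesTo_of_reduces hconf h₁ h).1, h.2⟩

private lemma exists_nf (ht : Terminating R) (u : List σ) : ∃ v, NormalizesTo R u v := by
  by_contra h
  have H : ∀ v : {v // Reduces R u v}, ∃ w : {w // Reduces R u w}, Step R v.1 w.1 := by
    rintro ⟨v, hv⟩
    have h2 : ¬ Irreducible R v := fun hirr => h ⟨v, hv, hirr⟩
    obtain ⟨w, hw⟩ := not_forall.mp h2
    exact ⟨⟨w, hv.tail (not_not.mp hw)⟩, not_not.mp hw⟩
  choose g hg using H
  refine ht ⟨fun n => (g^[n] ⟨u, Relation.ReflTransGen.refl⟩).1, fun n => ?_⟩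
  show Step R (g^[n] ⟨u, Relation.ReflTransGen.refl⟩).1
    (g^[n+1] ⟨u, Relation.ReflTransGen.refl⟩).1
  rw [Function.iterate_succ_apply']
  exact hg _

private lemma stepdown (hmon : Monadic R) {P w : List σ} {a : σ}
    (hu : Irreducible R (P ++ w)) (hwa : Irreducible R (w ++ [a]))
    {c : List σ} (hc : Reduces R (P ++ w ++ [a]) c) :
    c = P ++ w ++ [a] ∨
      ∃ q r, q.length < P.length ∧ q <+: P ∧ r.length ≤ 1 ∧ c = q ++ r := by
  induction hc with
  | refl => exact Or.inl rfl
  | tail _ hstep ih =>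
    rcases ih with rfl | ⟨q, r, hqP, hqpre, hr, rfl⟩
    · obtain ⟨x, y, l, r, hR, heq, rfl⟩ := hstep
      have h1 : r.length < l.length := (hmon (l, r) hR).1
      have h2 : r.length ≤ 1 := (hmon (l, r) hR).2
      right
      rcases List.eq_nil_or_concat y with rfl | ⟨y', b, rfl⟩
      · simp only [List.append_nil] at heq ⊢
        by_cases hx : P.length ≤ x.length
        · exfalso
          have hxpre : P <+: x :=
            List.prefix_of_prefix_length_le ⟨w ++ [a], by simp⟩ ⟨l, heq.symm⟩ hx
          obtain ⟨x', rfl⟩ := hxpre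
          have hwl : w ++ [a] = x' ++ l := by
            have h3 := heq
            rw [List.append_assoc P w, List.append_assoc P x'] at h3
            exact List.append_cancel_left h3
          exact hwa (x' ++ r) ⟨x', [], l, r, hR, by simp [hwl], by simp⟩
        · push_neg at hx
          have hxpre : x <+: P :=
            List.prefix_of_prefix_length_le ⟨l, heq.symm⟩ ⟨w ++ [a], by simp⟩ hx.le
          exact ⟨x, r, hx, hxpre, h2, rfl⟩
      · exfalso
        have heq' : P ++ w = x ++ l ++ y' := by
          have h3 : (P ++ w) ++ [a] = (x ++ l ++ y') ++ [b] := by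
            simpa [List.append_assoc] using heq
          exact (List.append_inj' h3 rfl).1
        exact hu (x ++ r ++ y') ⟨x, y', l, r, hR, heq', rfl⟩
    · obtain ⟨x, y, l, t, hR, heq, rfl⟩ := hstep
      have ht1 : t.length < l.length := (hmon (l, t) hR).1
      have ht2 : t.length ≤ 1 := (hmon (l, t) hR).2
      right
      have hlen := congrArg List.length heq
      simp only [List.length_append] at hlen
      have hxl : q.length < x.length + l.length := by
        by_contra hle
        push_neg at hle
        have hpre : x ++ l <+: q :=
          List.prefix_of_prefix_length_le ⟨y, by simp [heq, List.append_assoc]⟩ ⟨r, rfl⟩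
            (by simpa using hle)
        obtain ⟨z, hz⟩ := hpre
        have hqirr : Irreducible R q :=
          irred_of_infix hu ((hqpre.trans (List.prefix_append P w)).isInfix)
        exact hqirr (x ++ t ++ z) ⟨x, z, l, t, hR, hz.symm, rfl⟩
      have hylen : y.length = 0 := by omega
      have hxq : x.length ≤ q.length := by omega
      have hy : y = [] := List.eq_nil_of_length_eq_zero hylen
      subst hy
      simp only [List.append_nil] at heq ⊢
      have hxpre : x <+: q :=
        List.prefix_of_prefix_length_le ⟨l, heq.symm⟩ ⟨r, rfl⟩ hxq
      exact ⟨x, t, lt_of_le_of_lt hxq hqP, hxpre.trans hqpre, ht2, rfl⟩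

private lemma key (hmon : Monadic R) (ht : Terminating R) (hconf : Confluent R)
    {α : List σ} (hα : Irreducible R α) :
    ∀ X c, Irreducible R X → NormalizesTo R (α ++ X) c →
      ∃ p s X₁ X₂, p <+: α ∧ s.length ≤ 1 ∧ X = X₁ ++ X₂ ∧ c = (p ++ s) ++ X₂ ∧
        NormalizesTo R (α ++ X₁) (p ++ s) := by
  intro X
  induction X using List.reverseRecOn with
  | nil =>
    intro c _ hc
    rw [List.append_nil] at hc
    have hcα : c = α := reduces_eq_of_irred hα hc.1
    refine ⟨α, [], [], [], List.prefix_refl α, by simp, by simp, by simp [hcα], ?_⟩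
    simp only [List.append_nil]
    exact ⟨Relation.ReflTransGen.refl, hα⟩
  | append_singleton X₀ a ih =>
    intro c hX hc
    have hX₀ : Irreducible R X₀ := irred_of_infix hX ⟨[], [a], by simp⟩
    obtain ⟨u, hu⟩ := exists_nf ht (α ++ X₀)
    obtain ⟨p₀, s₀, X₁, X₂, hp₀, hs₀, hXeq, hueq, hn₁⟩ := ih u hX₀ hu
    have hred : Reduces R (α ++ (X₀ ++ [a])) (u ++ [a]) := by
      rw [← List.append_assoc]
      exact reduces_append_right [a] hu.1
    have hc' : NormalizesTo R (u ++ [a]) c := normalizesTo_of_reduces hconf hred hc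
    have huirr : Irreducible R ((p₀ ++ s₀) ++ X₂) := hueq ▸ hu.2
    have hwa : Irreducible R (X₂ ++ [a]) :=
      irred_of_infix hX ⟨X₁, [], by simp [hXeq]⟩
    have hsd := stepdown hmon huirr hwa (c := c) (by rw [← hueq]; exact hc'.1)
    rcases hsd with hceq | ⟨q, t, hlen, hqpre, htlen, hct⟩
    · exact ⟨p₀, s₀, X₁, X₂ ++ [a], hp₀, hs₀, by rw [hXeq, List.append_assoc],
        by rw [hceq]; simp [List.append_assoc], hn₁⟩
    · have hq : q <+: p₀ := by
        refine List.prefix_of_prefix_length_le hqpre (List.prefix_append p₀ s₀) ?_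
        rw [List.length_append] at hlen
        omega
      exact ⟨q, t, X₀ ++ [a], [], hq.trans hp₀, htlen, by simp, by simp [hct],
        hct ▸ hc⟩

private lemma mem_MP_self {α p s : List σ} (hp : p <+: α) (hs : s.length ≤ 1)
    (hirr : Irreducible R (p ++ s)) : (p ++ s) ∈ MP R α :=
  ⟨p, s, hp, hs, Relation.ReflTransGen.refl, hirr⟩

private lemma split (hmon : Monadic R) (ht : Terminating R) (hconf : Confluent R)
    {α β X A B : List σ}
    (hα : Irreducible R α) (hβ : Irreducible R β) (hX : Irreducible R X)
    (hA : NormalizesTo R (α ++ X) A) (hB : NormalizesTo R (β ++ X) B) :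
    ∃ X' M C E, X = X' ++ M ∧ A = C ++ M ∧ B = E ++ M ∧
      NormalizesTo R (α ++ X') C ∧ NormalizesTo R (β ++ X') E ∧
      (C ∈ MP R α ∨ E ∈ MP R β) := by
  obtain ⟨p₁, s₁, U₁, M₁, hp₁, hs₁, hXeq₁, hAeq, hn₁⟩ := key hmon ht hconf hα X A hX hA
  obtain ⟨p₂, s₂, U₂, M₂, hp₂, hs₂, hXeq₂, hBeq, hn₂⟩ := key hmon ht hconf hβ X B hX hB
  rcases le_total M₁.length M₂.length with h | h
  · obtain ⟨Z, hZ⟩ := suffix_of_suffix_length_le' ⟨U₁, hXeq₁.symm⟩ ⟨U₂, hXeq₂.symm⟩ h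
    have hU : U₁ = U₂ ++ Z := by
      refine List.append_cancel_right (bs := M₁) ?_
      rw [← hXeq₁, List.append_assoc, hZ]
      exact hXeq₂
    have hBeq' : B = ((p₂ ++ s₂) ++ Z) ++ M₁ := by
      rw [hBeq, ← hZ]
      simp [List.append_assoc]
    refine ⟨U₁, M₁, p₁ ++ s₁, (p₂ ++ s₂) ++ Z, hXeq₁, hAeq, hBeq', hn₁, ⟨?_, ?_⟩,
      Or.inl (mem_MP_self hp₁ hs₁ hn₁.2)⟩
    · rw [hU, ← List.append_assoc]
      exact reduces_append_right Z hn₂.1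
    · exact irred_of_infix hB.2 (show ((p₂ ++ s₂) ++ Z) <+: B from ⟨M₁, hBeq'.symm⟩).isInfix
  · obtain ⟨Z, hZ⟩ := suffix_of_suffix_length_le' ⟨U₂, hXeq₂.symm⟩ ⟨U₁, hXeq₁.symm⟩ h
    have hU : U₂ = U₁ ++ Z := by
      refine List.append_cancel_right (bs := M₂) ?_
      rw [← hXeq₂, List.append_assoc, hZ]
      exact hXeq₁
    have hAeq' : A = ((p₁ ++ s₁) ++ Z) ++ M₂ := by
      rw [hAeq, ← hZ]
      simp [List.append_assoc]
    refine ⟨U₂, M₂, (p₁ ++ s₁) ++ Z, p₂ ++ s₂, hXeq₂, hAeq', hBeq, ⟨?_, ?_⟩, hn₂,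
      Or.inr (mem_MP_self hp₂ hs₂ hn₂.2)⟩
    · rw [hU, ← List.append_assoc]
      exact reduces_append_right Z hn₁.1
    · exact irred_of_infix hA.2 (show ((p₁ ++ s₁) ++ Z) <+: A from ⟨M₂, hAeq'.symm⟩).isInfix

private lemma core (hmon : Monadic R) (ht : Terminating R) (hconf : Confluent R)
    {α β X Y A B : List σ}
    (hne : X ≠ Y) (hβ : Irreducible R β)
    (hX : Irreducible R X) (hY : Irreducible R Y)
    (hAX : NormalizesTo R (α ++ X) A) (hAY : NormalizesTo R (α ++ Y) A)
    (hBX : NormalizesTo R (β ++ X) B) (hBY : NormalizesTo R (β ++ Y) B) :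
    ∃ X' Y' V γ₂, X' ≠ Y' ∧ Irreducible R X' ∧ Irreducible R Y' ∧ Irreducible R V ∧
      Irreducible R (X' ++ V) ∧ Irreducible R (Y' ++ V) ∧ γ₂ ∈ MP R β ∧
      NormalizesTo R (β ++ X') γ₂ ∧ NormalizesTo R (β ++ Y') γ₂ ∧
      NormalizesTo R (α ++ (X' ++ V)) A ∧ NormalizesTo R (α ++ (Y' ++ V)) A := by
  obtain ⟨p₁, s₁, X₀, V₁, hp₁, hs₁, hXeq, hBeq₁, hn₁⟩ := key hmon ht hconf hβ X B hX hBX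
  obtain ⟨p₂, s₂, Y₀, V₂, hp₂, hs₂, hYeq, hBeq₂, hn₂⟩ := key hmon ht hconf hβ Y B hY hBY
  rcases le_total V₁.length V₂.length with h | h
  · obtain ⟨W, hW⟩ := suffix_of_suffix_length_le' ⟨p₁ ++ s₁, hBeq₁.symm⟩
      ⟨p₂ ++ s₂, hBeq₂.symm⟩ h
    have hδ : p₁ ++ s₁ = (p₂ ++ s₂) ++ W := by
      refine List.append_cancel_right (bs := V₁) ?_
      rw [← hBeq₁, List.append_assoc, hW]
      exact hBeq₂
    have hYeq' : Y = (Y₀ ++ W) ++ V₁ := by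
      rw [List.append_assoc, hW]
      exact hYeq
    refine ⟨X₀, Y₀ ++ W, V₁, p₁ ++ s₁, ?_, ?_, ?_, ?_, ?_, ?_,
      mem_MP_self hp₁ hs₁ hn₁.2, hn₁, ⟨?_, hn₁.2⟩, ?_, ?_⟩
    · intro hcon
      exact hne (by rw [hXeq, hYeq', hcon])
    · exact irred_of_infix hX ⟨[], V₁, by simp [hXeq]⟩
    · exact irred_of_infix hY ⟨[], V₁, by simp [hYeq']⟩
    · exact irred_of_infix hX ⟨X₀, [], by simp [hXeq]⟩
    · exact hXeq ▸ hX
    · exact hYeq' ▸ hY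
    · rw [hδ, ← List.append_assoc]
      exact reduces_append_right W hn₂.1
    · rw [← hXeq]
      exact hAX
    · rw [← hYeq']
      exact hAY
  · obtain ⟨W, hW⟩ := suffix_of_suffix_length_le' ⟨p₂ ++ s₂, hBeq₂.symm⟩
      ⟨p₁ ++ s₁, hBeq₁.symm⟩ h
    have hδ : p₂ ++ s₂ = (p₁ ++ s₁) ++ W := by
      refine List.append_cancel_right (bs := V₂) ?_
      rw [← hBeq₂, List.append_assoc, hW]
      exact hBeq₁
    have hXeq' : X = (X₀ ++ W) ++ V₂ := by
      rw [List.append_assoc, hW]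
      exact hXeq
    refine ⟨X₀ ++ W, Y₀, V₂, p₂ ++ s₂, ?_, ?_, ?_, ?_, ?_, ?_,
      mem_MP_self hp₂ hs₂ hn₂.2, ⟨?_, hn₂.2⟩, hn₂, ?_, ?_⟩
    · intro hcon
      exact hne (by rw [hXeq', hYeq, hcon])
    · exact irred_of_infix hX ⟨[], V₂, by simp [hXeq']⟩
    · exact irred_of_infix hY ⟨[], V₂, by simp [hYeq]⟩
    · exact irred_of_infix hY ⟨Y₀, [], by simp [hYeq]⟩
    · exact hXeq' ▸ hX
    · exact hYeq ▸ hY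
    · rw [hδ, ← List.append_assoc]
      exact reduces_append_right W hn₁.1
    · rw [← hXeq']
      exact hAX
    · rw [← hYeq]
      exact hAY
private lemma forward (hmon : Monadic R) (ht : Terminating R) (hconf : Confluent R)
    {α β : List σ} (hα : Irreducible R α) (hβ : Irreducible R β) :
    ∀ n X Y, X.length + Y.length ≤ n → X ≠ Y → Irreducible R X → Irreducible R Y →
      Joins R (α ++ X) (α ++ Y) → Joins R (β ++ X) (β ++ Y) →
      ∃ X' Y' V γ₁ γ₂ : List σ,
        X' ≠ Y' ∧
        γ₁ ∈ MP R α ∧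
        γ₂ ∈ MP R β ∧
        Irreducible R X' ∧ Irreducible R Y' ∧ Irreducible R V ∧
        Irreducible R (X' ++ V) ∧ Irreducible R (Y' ++ V) ∧
        ((NormalizesTo R (α ++ X' ++ V) γ₁ ∧
          NormalizesTo R (α ++ Y' ++ V) γ₁ ∧
          NormalizesTo R (β ++ X') γ₂ ∧
          NormalizesTo R (β ++ Y') γ₂) ∨
         (NormalizesTo R (α ++ X') γ₁ ∧
          NormalizesTo R (α ++ Y') γ₁ ∧
          NormalizesTo R (β ++ X' ++ V) γ₂ ∧
          NormalizesTo R (β ++ Y' ++ V) γ₂)) := by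
  intro n
  induction n using Nat.strong_induction_on with
  | _ n ih =>
    intro X Y hlen hne hX hY hjα hjβ
    obtain ⟨A, hAX⟩ := exists_nf ht (α ++ X)
    have hAY : NormalizesTo R (α ++ Y) A := joins_normalizesTo hconf hjα hAX
    obtain ⟨B, hBX⟩ := exists_nf ht (β ++ X)
    have hBY : NormalizesTo R (β ++ Y) B := joins_normalizesTo hconf hjβ hBX
    obtain ⟨X', M, C, E, hXeq, hAeq, hBeq, hCX, hEX, hdisjX⟩ :=
      split hmon ht hconf hα hβ hX hAX hBX
    obtain ⟨Y', N, D, F, hYeq, hAeq', hBeq', hDY, hFY, hdisjY⟩ :=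
      split hmon ht hconf hα hβ hY hAY hBY
    by_cases hM : M = []
    · subst hM
      rw [List.append_nil] at hXeq hAeq hBeq
      rcases hdisjX with hCmp | hEmp
      · obtain ⟨X₀, Y₀, V, γ₂, h1, h2, h3, h4, h5, h6, h7, h8, h9, h10, h11⟩ :=
          core hmon ht hconf hne hβ hX hY hAX hAY hBX hBY
        exact ⟨X₀, Y₀, V, A, γ₂, h1, hAeq.symm ▸ hCmp, h7, h2, h3, h4, h5, h6,
          Or.inl ⟨by rw [List.append_assoc]; exact h10,
            by rw [List.append_assoc]; exact h11, h8, h9⟩⟩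
      · obtain ⟨X₀, Y₀, V, γ₁, h1, h2, h3, h4, h5, h6, h7, h8, h9, h10, h11⟩ :=
          core hmon ht hconf hne hα hX hY hBX hBY hAX hAY
        exact ⟨X₀, Y₀, V, γ₁, B, h1, h7, hBeq.symm ▸ hEmp, h2, h3, h4, h5, h6,
          Or.inr ⟨h8, h9, by rw [List.append_assoc]; exact h10,
            by rw [List.append_assoc]; exact h11⟩⟩
    · by_cases hN : N = []
      · subst hN
        rw [List.append_nil] at hYeq hAeq' hBeq'
        rcases hdisjY with hCmp | hEmp
        · obtain ⟨X₀, Y₀, V, γ₂, h1, h2, h3, h4, h5, h6, h7, h8, h9, h10, h11⟩ :=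
            core hmon ht hconf hne hβ hX hY hAX hAY hBX hBY
          exact ⟨X₀, Y₀, V, A, γ₂, h1, hAeq'.symm ▸ hCmp, h7, h2, h3, h4, h5, h6,
            Or.inl ⟨by rw [List.append_assoc]; exact h10,
              by rw [List.append_assoc]; exact h11, h8, h9⟩⟩
        · obtain ⟨X₀, Y₀, V, γ₁, h1, h2, h3, h4, h5, h6, h7, h8, h9, h10, h11⟩ :=
            core hmon ht hconf hne hα hX hY hBX hBY hAX hAY
          exact ⟨X₀, Y₀, V, γ₁, B, h1, h7, hBeq'.symm ▸ hEmp, h2, h3, h4, h5, h6,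
            Or.inr ⟨h8, h9, by rw [List.append_assoc]; exact h10,
              by rw [List.append_assoc]; exact h11⟩⟩
      · rcases le_total M.length N.length with hMN | hMN
        · obtain ⟨Z, hZ⟩ := suffix_of_suffix_length_le' ⟨C, hAeq.symm⟩ ⟨D, hAeq'.symm⟩ hMN
          have hCD : C = D ++ Z := by
            refine List.append_cancel_right (bs := M) ?_
            rw [← hAeq, List.append_assoc, hZ]
            exact hAeq'
          have hEF : E = F ++ Z := by
            refine List.append_cancel_right (bs := M) ?_
            rw [← hBeq, List.append_assoc, hZ]
            exact hBeq'
          have hY2 : Y = (Y' ++ Z) ++ M := by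
            rw [List.append_assoc, hZ]
            exact hYeq
          refine ih (X'.length + (Y' ++ Z).length) ?_ X' (Y' ++ Z) le_rfl ?_ ?_ ?_ ?_ ?_
          · have h1 : X'.length < X.length := by
              rw [hXeq, List.length_append]
              have := List.length_pos_iff.2 hM
              omega
            have h2 : (Y' ++ Z).length ≤ Y.length := by
              rw [hY2]
              simp only [List.length_append]
              omega
            omega
          · intro hcon
            exact hne (by rw [hXeq, hY2, hcon])
          · exact irred_of_infix hX ⟨[], M, by simp [hXeq]⟩
          · exact irred_of_infix hY ⟨[], M, by simp [hY2]⟩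
          · refine ⟨C, hCX.1, ?_⟩
            rw [← List.append_assoc, hCD]
            exact reduces_append_right Z hDY.1
          · refine ⟨E, hEX.1, ?_⟩
            rw [← List.append_assoc, hEF]
            exact reduces_append_right Z hFY.1
        · obtain ⟨Z, hZ⟩ := suffix_of_suffix_length_le' ⟨D, hAeq'.symm⟩ ⟨C, hAeq.symm⟩ hMN
          have hDC : D = C ++ Z := by
            refine List.append_cancel_right (bs := N) ?_
            rw [← hAeq', List.append_assoc, hZ]
            exact hAeq
          have hFE : F = E ++ Z := by
            refine List.append_cancel_right (bs := N) ?_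
            rw [← hBeq', List.append_assoc, hZ]
            exact hBeq
          have hX2 : X = (X' ++ Z) ++ N := by
            rw [List.append_assoc, hZ]
            exact hXeq
          refine ih ((X' ++ Z).length + Y'.length) ?_ (X' ++ Z) Y' le_rfl ?_ ?_ ?_ ?_ ?_
          · have h1 : Y'.length < Y.length := by
              rw [hYeq, List.length_append]
              have := List.length_pos_iff.2 hN
              omega
            have h2 : (X' ++ Z).length ≤ X.length := by
              rw [hX2]
              simp only [List.length_append]
              omega
            omega
          · intro hcon
            exact hne (by rw [hX2, hYeq, hcon])
          · exact irred_of_infix hX ⟨[], N, by simp [hX2]⟩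
          · exact irred_of_infix hY ⟨[], N, by simp [hYeq]⟩
          · refine ⟨D, ?_, hDY.1⟩
            rw [← List.append_assoc, hDC]
            exact reduces_append_right Z hCX.1
          · refine ⟨F, ?_, hFY.1⟩
            rw [← List.append_assoc, hFE]
            exact reduces_append_right Z hEX.1

end Proofs
/-- For a finite monadic convergent SRS `R` and irreducible
strings `α, β`: there exist distinct irreducible `X, Y` with `αX ↓_R αY` and
`βX ↓_R βY` iff there exist irreducible strings `X', Y', V` and strings
`γ₁ ∈ MP(α)`, `γ₂ ∈ MP(β)` with `X' ≠ Y'`, `X'V` and `Y'V` irreducible, and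
either (a) `αX'V →!_R γ₁`, `αY'V →!_R γ₁`, `βX' →!_R γ₂`, `βY' →!_R γ₂`, or
(b) `αX' →!_R γ₁`, `αY' →!_R γ₁`, `βX'V →!_R γ₂`, `βY'V →!_R γ₂`. -/
theorem monadic_one_mapping_CE_characterization {σ : Type*} [Fintype σ]
    (R : List (List σ × List σ)) (hmon : SRS.Monadic R) (hconv : SRS.Convergent R)
    (α β : List σ) (hα : SRS.Irreducible R α) (hβ : SRS.Irreducible R β) :
    (∃ X Y : List σ, X ≠ Y ∧ SRS.Irreducible R X ∧ SRS.Irreducible R Y ∧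
        SRS.Joins R (α ++ X) (α ++ Y) ∧ SRS.Joins R (β ++ X) (β ++ Y)) ↔
      ∃ X' Y' V γ₁ γ₂ : List σ,
        X' ≠ Y' ∧
        γ₁ ∈ SRS.MP R α ∧
        γ₂ ∈ SRS.MP R β ∧
        SRS.Irreducible R X' ∧ SRS.Irreducible R Y' ∧ SRS.Irreducible R V ∧
        SRS.Irreducible R (X' ++ V) ∧ SRS.Irreducible R (Y' ++ V) ∧
        ((SRS.NormalizesTo R (α ++ X' ++ V) γ₁ ∧
          SRS.NormalizesTo R (α ++ Y' ++ V) γ₁ ∧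
          SRS.NormalizesTo R (β ++ X') γ₂ ∧
          SRS.NormalizesTo R (β ++ Y') γ₂) ∨
         (SRS.NormalizesTo R (α ++ X') γ₁ ∧
          SRS.NormalizesTo R (α ++ Y') γ₁ ∧
          SRS.NormalizesTo R (β ++ X' ++ V) γ₂ ∧
          SRS.NormalizesTo R (β ++ Y' ++ V) γ₂)) := by
  obtain ⟨hterm, hconf⟩ := hconv
  constructor
  · rintro ⟨X, Y, hne, hX, hY, hjα, hjβ⟩
    exact forward hmon hterm hconf hα hβ (X.length + Y.length) X Y le_rfl hne hX hY hjα hjβ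
  · rintro ⟨X', Y', V, γ₁, γ₂, hne, hγ₁, hγ₂, hX', hY', hV, hXV, hYV, hcase | hcase⟩
    · obtain ⟨h1, h2, h3, h4⟩ := hcase
      refine ⟨X' ++ V, Y' ++ V, fun hcon => hne (List.append_cancel_right hcon),
        hXV, hYV, ?_, ?_⟩
      · exact ⟨γ₁, by rw [← List.append_assoc]; exact h1.1,
          by rw [← List.append_assoc]; exact h2.1⟩
      · exact ⟨γ₂ ++ V, by rw [← List.append_assoc]; exact reduces_append_right V h3.1,
          by rw [← List.append_assoc]; exact reduces_append_right V h4.1⟩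
    · obtain ⟨h1, h2, h3, h4⟩ := hcase
      refine ⟨X' ++ V, Y' ++ V, fun hcon => hne (List.append_cancel_right hcon),
        hXV, hYV, ?_, ?_⟩
      · exact ⟨γ₁ ++ V, by rw [← List.append_assoc]; exact reduces_append_right V h1.1,
          by rw [← List.append_assoc]; exact reduces_append_right V h2.1⟩
      · exact ⟨γ₂, by rw [← List.append_assoc]; exact h3.1,
          by rw [← List.append_assoc]; exact h4.1⟩
end
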